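/- arXiv:1508.07181 — 4 statements merged into one kernel-verified Lean document; each statement's English description precedes it below -/
import Mathlib

section
/- The Cartesian product of two connected directed hypergraphs is connected, and conversely, if the Cartesian product of two directed hypergraphs is connected then both factors are connected. -/
structure DiHypergraph (V : Type) where
  arcs : Set (Set V × Set V)
  tail_nonempty : ∀ e ∈ arcs, (Prod.fst e).Nonempty
  head_nonempty : ∀ e ∈ arcs, (Prod.snd e).Nonempty

namespace DiHypergraph

variable {V V1 V2 V3 : Type}

/-- The set of vertices of an arc. -/
def verts (e : Set V × Set V) : Set V := e.1 ∪ e.2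

/-- Cartesian product of directed hypergraphs. -/
def prod (H1 : DiHypergraph V1) (H2 : DiHypergraph V2) : DiHypergraph (V1 × V2) where
  arcs := {e | (∃ x : V1, ∃ f ∈ H2.arcs,
                 e = ((fun y => (x, y)) '' f.1, (fun y => (x, y)) '' f.2)) ∨
               (∃ y : V2, ∃ f ∈ H1.arcs,
                 e = ((fun x => (x, y)) '' f.1, (fun x => (x, y)) '' f.2))}
  tail_nonempty := by
    rintro e (⟨x, f, hf, rfl⟩ | ⟨y, f, hf, rfl⟩)
    · exact (H2.tail_nonempty f hf).image _
    · exact (H1.tail_nonempty f hf).image _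
  head_nonempty := by
    rintro e (⟨x, f, hf, rfl⟩ | ⟨y, f, hf, rfl⟩)
    · exact (H2.head_nonempty f hf).image _
    · exact (H1.head_nonempty f hf).image _

/-- Two vertices are weakly adjacent if they lie in a common arc. -/
def adj (H : DiHypergraph V) (x y : V) : Prop :=
  ∃ e ∈ H.arcs, x ∈ verts e ∧ y ∈ verts e

/-- Weak connectivity: any two vertices joined by a weak path. -/
def Connected (H : DiHypergraph V) : Prop :=
  Nonempty V ∧ ∀ x y : V, Relation.ReflTransGen H.adj x y

/-- `φ` is an isomorphism of directed hypergraphs. -/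
def IsIsoVia (H1 : DiHypergraph V1) (H2 : DiHypergraph V2) (φ : V1 ≃ V2) : Prop :=
  ∀ t h : Set V1, (t, h) ∈ H1.arcs ↔ (φ '' t, φ '' h) ∈ H2.arcs

/-- Isomorphy of directed hypergraphs. -/
def Iso (H1 : DiHypergraph V1) (H2 : DiHypergraph V2) : Prop :=
  ∃ φ : V1 ≃ V2, IsIsoVia H1 H2 φ

/-- Cartesian product of a family of directed hypergraphs. -/
def piProd {I : Type} {Vf : I → Type} (Hf : ∀ i, DiHypergraph (Vf i)) :
    DiHypergraph (∀ i, Vf i) where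
  arcs := {e | ∃ (i : I) (f : Set (Vf i) × Set (Vf i)), f ∈ (Hf i).arcs ∧ ∃ base : ∀ j, Vf j,
      e.1 = {v | v i ∈ f.1 ∧ ∀ j, j ≠ i → v j = base j} ∧
      e.2 = {v | v i ∈ f.2 ∧ ∀ j, j ≠ i → v j = base j}}
  tail_nonempty := by
    classical
    rintro e ⟨i, f, hf, base, h1, h2⟩
    obtain ⟨x, hx⟩ := (Hf i).tail_nonempty f hf
    refine ⟨Function.update base i x, ?_⟩
    rw [h1]
    exact ⟨by simpa using hx, fun j hj => Function.update_of_ne hj _ _⟩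
  head_nonempty := by
    classical
    rintro e ⟨i, f, hf, base, h1, h2⟩
    obtain ⟨x, hx⟩ := (Hf i).head_nonempty f hf
    refine ⟨Function.update base i x, ?_⟩
    rw [h2]
    exact ⟨by simpa using hx, fun j hj => Function.update_of_ne hj _ _⟩

/-- The 2-section of a directed hypergraph. -/
def twoSection (H : DiHypergraph V) : SimpleGraph V where
  Adj x y := x ≠ y ∧ ∃ e ∈ H.arcs, x ∈ verts e ∧ y ∈ verts e
  symm := ⟨by rintro x y ⟨hxy, e, he, hx, hy⟩; exact ⟨hxy.symm, e, he, hy, hx⟩⟩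
  loopless := ⟨fun x h => h.1 rfl⟩

/-- Cartesian product of a family of simple graphs. -/
def piGraph {I : Type} {Vf : I → Type} (Gf : ∀ i, SimpleGraph (Vf i)) :
    SimpleGraph (∀ i, Vf i) where
  Adj x y := ∃ i, (Gf i).Adj (x i) (y i) ∧ ∀ j, j ≠ i → x j = y j
  symm := ⟨by rintro x y ⟨i, h, hj⟩; exact ⟨i, h.symm, fun j hji => (hj j hji).symm⟩⟩
  loopless := ⟨by rintro x ⟨i, h, -⟩; exact (Gf i).loopless.irrefl _ h⟩

/-- All vertices of the arc `e` agree in every coordinate except possibly `i`. -/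
def diffOnly {I : Type} {l : I → ℕ} (Υ : V ≃ ∀ i, Fin (l i)) (e : Set V × Set V) (i : I) :
    Prop :=
  ∀ x ∈ verts e, ∀ y ∈ verts e, ∀ j, j ≠ i → Υ x j = Υ y j

/-- Cyclic increment of the `i`-th coordinate of a vertex. -/
def incV {I : Type} [DecidableEq I] {l : I → ℕ} [∀ i, NeZero (l i)]
    (Υ : V ≃ ∀ i, Fin (l i)) (i : I) (v : V) : V :=
  Υ.symm (Function.update (Υ v) i (Υ v i + 1))

/-- Increment of an arc. -/
def incArc {I : Type} [DecidableEq I] {l : I → ℕ} [∀ i, NeZero (l i)]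
    (Υ : V ≃ ∀ i, Fin (l i)) (i : I) (e : Set V × Set V) : Set V × Set V :=
  (incV Υ i '' e.1, incV Υ i '' e.2)

/-- A pre-coordinatization: a coordinatization of the 2-section. -/
def IsPreCoord {I : Type} {l : I → ℕ} (H : DiHypergraph V) (Υ : V ≃ ∀ i, Fin (l i)) : Prop :=
  ∃ Gf : ∀ i, SimpleGraph (Fin (l i)),
    ∀ x y : V, (twoSection H).Adj x y ↔ (piGraph Gf).Adj (Υ x) (Υ y)

/-- A coordinatization: an isomorphism to a Cartesian product of directed hypergraphs. -/
def IsCoord {I : Type} {l : I → ℕ} (H : DiHypergraph V)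
    (Υ : V ≃ ∀ i, Fin (l i)) : Prop :=
  ∃ Hf : ∀ i, DiHypergraph (Fin (l i)), IsIsoVia H (piProd Hf) Υ

/-- A directed hypergraph is prime w.r.t. the Cartesian product. -/
def IsPrime (H : DiHypergraph V) : Prop :=
  (∃ x y : V, x ≠ y) ∧
  ¬ ∃ (α β : Type) (H1 : DiHypergraph α) (H2 : DiHypergraph β),
      (∃ a a' : α, a ≠ a') ∧ (∃ b b' : β, b ≠ b') ∧ Iso H (H1.prod H2)

/-- The rank of a directed hypergraph. -/
noncomputable def rank (H : DiHypergraph V) : ℕ :=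
  sSup ((fun e => (verts e).ncard) '' H.arcs)

/-- The one-vertex hypergraph without arcs. -/
def unitHG : DiHypergraph Unit where
  arcs := ∅
  tail_nonempty := by simp
  head_nonempty := by simp

end DiHypergraph

/-- A simple graph is prime w.r.t. the Cartesian graph product. -/
def SimpleGraph.IsPrimeCart {α : Type} (G : SimpleGraph α) : Prop :=
  (∃ x y : α, x ≠ y) ∧
  ¬ ∃ (β γ : Type) (G1 : SimpleGraph β) (G2 : SimpleGraph γ),
      (∃ b b' : β, b ≠ b') ∧ (∃ c c' : γ, c ≠ c') ∧ Nonempty (G ≃g G1.boxProd G2)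

open DiHypergraph in
theorem connected_prod_iff {V1 V2 : Type} (H1 : DiHypergraph V1) (H2 : DiHypergraph V2) :
    (H1.prod H2).Connected ↔ H1.Connected ∧ H2.Connected := by
  have adjL : ∀ (a c : V1) (b : V2), H1.adj a c → (H1.prod H2).adj (a, b) (c, b) := by
    rintro a c b ⟨e, he, ha, hc⟩
    refine ⟨((fun x => (x, b)) '' e.1, (fun x => (x, b)) '' e.2),
      Or.inr ⟨b, e, he, rfl⟩, ?_, ?_⟩
    · rcases ha with h | h
      exacts [Or.inl ⟨_, h, rfl⟩, Or.inr ⟨_, h, rfl⟩]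
    · rcases hc with h | h
      exacts [Or.inl ⟨_, h, rfl⟩, Or.inr ⟨_, h, rfl⟩]
  have adjR : ∀ (a : V1) (b d : V2), H2.adj b d → (H1.prod H2).adj (a, b) (a, d) := by
    rintro a b d ⟨e, he, hb, hd⟩
    refine ⟨((fun y => (a, y)) '' e.1, (fun y => (a, y)) '' e.2),
      Or.inl ⟨a, e, he, rfl⟩, ?_, ?_⟩
    · rcases hb with h | h
      exacts [Or.inl ⟨_, h, rfl⟩, Or.inr ⟨_, h, rfl⟩]
    · rcases hd with h | h
      exacts [Or.inl ⟨_, h, rfl⟩, Or.inr ⟨_, h, rfl⟩]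
  have proj : ∀ p q : V1 × V2, (H1.prod H2).adj p q →
      (H1.adj p.1 q.1 ∧ p.2 = q.2) ∨ (p.1 = q.1 ∧ H2.adj p.2 q.2) := by
    rintro p q ⟨e, he, hp, hq⟩
    rcases he with ⟨x, f, hf, rfl⟩ | ⟨y, f, hf, rfl⟩
    · simp only [verts, Set.image_union] at hp hq
      refine Or.inr ?_
      obtain ⟨bp, hbp, hpe⟩ : ∃ b ∈ verts f, (x, b) = p := by
        rcases hp with ⟨b, hb, h⟩ | ⟨b, hb, h⟩
        exacts [⟨b, Or.inl hb, h⟩, ⟨b, Or.inr hb, h⟩]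
      obtain ⟨bq, hbq, hqe⟩ : ∃ b ∈ verts f, (x, b) = q := by
        rcases hq with ⟨b, hb, h⟩ | ⟨b, hb, h⟩
        exacts [⟨b, Or.inl hb, h⟩, ⟨b, Or.inr hb, h⟩]
      subst hpe hqe
      exact ⟨rfl, f, hf, hbp, hbq⟩
    · simp only [verts, Set.image_union] at hp hq
      refine Or.inl ?_
      obtain ⟨ap, hap, hpe⟩ : ∃ a ∈ verts f, (a, y) = p := by
        rcases hp with ⟨a, hb, h⟩ | ⟨a, hb, h⟩
        exacts [⟨a, Or.inl hb, h⟩, ⟨a, Or.inr hb, h⟩]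
      obtain ⟨aq, haq, hqe⟩ : ∃ a ∈ verts f, (a, y) = q := by
        rcases hq with ⟨a, hb, h⟩ | ⟨a, hb, h⟩
        exacts [⟨a, Or.inl hb, h⟩, ⟨a, Or.inr hb, h⟩]
      subst hpe hqe
      exact ⟨⟨f, hf, hap, haq⟩, rfl⟩
  constructor
  · rintro ⟨⟨p⟩, hconn⟩
    refine ⟨⟨⟨p.1⟩, fun a c => ?_⟩, ⟨⟨p.2⟩, fun b d => ?_⟩⟩
    · have := hconn (a, p.2) (c, p.2)
      have key : ∀ q r : V1 × V2, Relation.ReflTransGen (H1.prod H2).adj q r →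
          Relation.ReflTransGen H1.adj q.1 r.1 := by
        intro q r h
        induction h with
        | refl => exact .refl
        | tail _ hadj ih =>
          rcases proj _ _ hadj with ⟨h1, _⟩ | ⟨h1, _⟩
          · exact ih.tail h1
          · rwa [h1] at ih
      exact key _ _ this
    · have := hconn (p.1, b) (p.1, d)
      have key : ∀ q r : V1 × V2, Relation.ReflTransGen (H1.prod H2).adj q r →
          Relation.ReflTransGen H2.adj q.2 r.2 := by
        intro q r h
        induction h with
        | refl => exact .refl
        | tail _ hadj ih =>
          rcases proj _ _ hadj with ⟨_, h2⟩ | ⟨_, h2⟩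
          · rwa [h2] at ih
          · exact ih.tail h2
      exact key _ _ this
  · rintro ⟨⟨⟨a0⟩, h1⟩, ⟨⟨b0⟩, h2⟩⟩
    refine ⟨⟨(a0, b0)⟩, ?_⟩
    rintro ⟨a, b⟩ ⟨c, d⟩
    have step1 : Relation.ReflTransGen (H1.prod H2).adj (a, b) (c, b) := by
      have := h1 a c
      clear h2
      induction this with
      | refl => exact .refl
      | tail _ hadj ih => exact ih.tail (adjL _ _ _ hadj)
    have step2 : Relation.ReflTransGen (H1.prod H2).adj (c, b) (c, d) := by
      have := h2 b d
      induction this with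
      | refl => exact .refl
      | tail _ hadj ih => exact ih.tail (adjR _ _ _ hadj)
    exact step1.trans step2
end

section
/- For any two directed hypergraphs H1 and H2, the 2-section of their Cartesian product equals the Cartesian (graph) product of their 2-sections: [H1□H2]_2 = [H1]_2 □ [H2]_2 (as graphs on the vertex set V(H1)×V(H2)). -/
open DiHypergraph in
theorem twoSection_prod {V1 V2 : Type} (H1 : DiHypergraph V1) (H2 : DiHypergraph V2) :
    twoSection (H1.prod H2) = (twoSection H1).boxProd (twoSection H2) := by
  ext ⟨x1, x2⟩ ⟨y1, y2⟩
  simp only [twoSection, SimpleGraph.boxProd_adj, prod, verts, Set.mem_setOf_eq,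
    Set.mem_union, Set.mem_image, Prod.mk.injEq]
  constructor
  · rintro ⟨hne, e, (⟨x, f, hf, rfl⟩ | ⟨y, f, hf, rfl⟩), hx, hy⟩
    · simp only [Set.mem_union, Set.mem_image, Prod.mk.injEq] at hx hy
      obtain ⟨a, ha, rfl, rfl⟩ | ⟨a, ha, rfl, rfl⟩ := hx <;>
        obtain ⟨b, hb, hb1, rfl⟩ | ⟨b, hb, hb1, rfl⟩ := hy <;>
        subst hb1 <;>
        exact Or.inr ⟨⟨fun h => hne (by simp [h]), f, hf, by simp [verts, ha, hb]⟩, rfl⟩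
    · simp only [Set.mem_union, Set.mem_image, Prod.mk.injEq] at hx hy
      obtain ⟨a, ha, rfl, rfl⟩ | ⟨a, ha, rfl, rfl⟩ := hx <;>
        obtain ⟨b, hb, rfl, hb1⟩ | ⟨b, hb, rfl, hb1⟩ := hy <;>
        subst hb1 <;>
        exact Or.inl ⟨⟨fun h => hne (by simp [h]), f, hf, by simp [verts, ha, hb]⟩, rfl⟩
  · rintro (⟨⟨hne, f, hf, hx, hy⟩, rfl⟩ | ⟨⟨hne, f, hf, hx, hy⟩, rfl⟩)
    · refine ⟨fun h => hne (congrArg Prod.fst h),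
        ((fun x => (x, x2)) '' f.1, (fun x => (x, x2)) '' f.2),
        Or.inr ⟨x2, f, hf, rfl⟩, ?_, ?_⟩ <;>
        simp only [Set.mem_union, Set.mem_image, Prod.mk.injEq, verts] at hx hy ⊢
      · rcases hx with h | h
        · exact Or.inl ⟨x1, h, by simp⟩
        · exact Or.inr ⟨x1, h, by simp⟩
      · rcases hy with h | h
        · exact Or.inl ⟨y1, h, by simp⟩
        · exact Or.inr ⟨y1, h, by simp⟩
    · refine ⟨fun h => hne (congrArg Prod.snd h),
        ((fun y => (x1, y)) '' f.1, (fun y => (x1, y)) '' f.2),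
        Or.inl ⟨x1, f, hf, rfl⟩, ?_, ?_⟩ <;>
        simp only [Set.mem_union, Set.mem_image, Prod.mk.injEq, verts] at hx hy ⊢
      · rcases hx with h | h
        · exact Or.inl ⟨x2, h, by simp⟩
        · exact Or.inr ⟨x2, h, by simp⟩
      · rcases hy with h | h
        · exact Or.inl ⟨y2, h, by simp⟩
        · exact Or.inr ⟨y2, h, by simp⟩
end

section
/- Let H=(V,E) be a directed hypergraph whose 2-section factors as [H]_2 = □_{i=1}^k G_i into k nontrivial factors, let n=|V| and m=|E|. Then for every fixed l∈ℕ_0 there is a constant C (depending only on l) with k^l · log(m) ≤ C·n. -/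
open DiHypergraph in
lemma layer_lemma {V : Type} (H : DiHypergraph V) {k : ℕ} {nf : Fin k → ℕ}
    (Gf : ∀ i, SimpleGraph (Fin (nf i))) (g : twoSection H ≃g piGraph Gf)
    (hk : 1 ≤ k) {e : Set V × Set V} (he : e ∈ H.arcs) :
    ∃ i : Fin k, ∀ x ∈ verts e, ∀ y ∈ verts e, ∀ j, j ≠ i → g x j = g y j := by
  have hadj : ∀ x y : V, x ∈ verts e → y ∈ verts e → x ≠ y →
      ∃ i, (Gf i).Adj (g x i) (g y i) ∧ ∀ j, j ≠ i → g x j = g y j := by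
    intro x y hx hy hne
    exact g.map_adj_iff.mpr ⟨hne, e, he, hx, hy⟩
  by_cases hsub : ∀ x ∈ verts e, ∀ y ∈ verts e, x = y
  · exact ⟨⟨0, hk⟩, fun x hx y hy j _ => by rw [hsub x hx y hy]⟩
  push_neg at hsub
  obtain ⟨x, hx, y, hy, hxy⟩ := hsub
  obtain ⟨i, hadji, hagree⟩ := hadj x y hx hy hxy
  refine ⟨i, ?_⟩
  have key : ∀ z ∈ verts e, ∀ j, j ≠ i → g z j = g x j := by
    intro z hz j hj
    by_cases hzx : z = x
    · rw [hzx]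
    obtain ⟨a, hadja, hagra⟩ := hadj z x hz hx hzx
    by_cases hai : a = i
    · exact hagra j (by rw [hai]; exact hj)
    · exfalso
      have hzi : g z i = g x i := hagra i (fun h => hai h.symm)
      have hxyi : g x i ≠ g y i := hadji.ne
      have hzy : z ≠ y := by
        intro h
        apply hxyi
        rw [← h, ← hzi]
      obtain ⟨b, hadjb, hagrb⟩ := hadj z y hz hy hzy
      -- g z i ≠ g y i, so b = i; g z a ≠ g y a, so b = a; contradiction
      have h1 : g z i ≠ g y i := by rw [hzi]; exact hxyi
      have hbi : i = b := by
        by_contra hc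
        exact h1 (hagrb i hc)
      have h2 : g z a ≠ g y a := by
        have : g x a = g y a := hagree a hai
        rw [← this]
        exact hadja.ne
      have hba : a = b := by
        by_contra hc
        exact h2 (hagrb a hc)
      exact hai (hba.trans hbi.symm)
  intro x' hx' y' hy' j hj
  rw [key x' hx' j hj, key y' hy' j hj]

open DiHypergraph in
lemma count_lemma {V : Type} [Fintype V] (H : DiHypergraph V) {k : ℕ} {nf : Fin k → ℕ}
    (Gf : ∀ i, SimpleGraph (Fin (nf i))) (g : twoSection H ≃g piGraph Gf)
    (hk : 1 ≤ k) (h2 : ∀ i, 2 ≤ nf i) {N : ℕ} (hN : ∀ i, nf i ≤ N) :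
    H.arcs.ncard ≤ k * (2^N * 2^N * Fintype.card V) := by
  classical
  have hV : Nonempty V := ⟨g.toEquiv.symm fun i => ⟨0, by have := h2 i; omega⟩⟩
  have hch : ∀ e : Set V × Set V, ∃ q : Fin k × V, e ∈ H.arcs →
      q.2 ∈ verts e ∧ ∀ x ∈ verts e, ∀ j, j ≠ q.1 → g x j = g q.2 j := by
    intro e
    by_cases he : e ∈ H.arcs
    · obtain ⟨i, hi⟩ := layer_lemma H Gf g hk he
      obtain ⟨v, hv⟩ := H.tail_nonempty e he
      have hv' : v ∈ verts e := Set.mem_union_left _ hv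
      exact ⟨(i, v), fun _ => ⟨hv', fun x hx j hj => hi x hx v hv' j hj⟩⟩
    · exact ⟨(⟨0, hk⟩, Classical.arbitrary V), fun h => absurd h he⟩
  choose q hq using hch
  set F : Set V × Set V → Fin k × (Set (Fin N) × Set (Fin N)) × V := fun e =>
    ((q e).1, ((fun x => Fin.castLE (hN (q e).1) (g x (q e).1)) '' e.1,
               (fun x => Fin.castLE (hN (q e).1) (g x (q e).1)) '' e.2), (q e).2) with hF
  have hinj : Set.InjOn F H.arcs := by
    intro e1 he1 e2 he2 heq
    obtain ⟨hv1, hagr1⟩ := hq e1 he1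
    obtain ⟨hv2, hagr2⟩ := hq e2 he2
    simp only [hF, Prod.mk.injEq] at heq
    obtain ⟨hI, ⟨hS1, hS2⟩, hvv⟩ := heq
    set i := (q e1).1 with hi
    set v := (q e1).2 with hv
    rw [← hI] at hS1 hS2 hagr2
    rw [← hvv] at hagr2 hv2
    have sub : ∀ (A B : Set V) (eA eB : Set V × Set V),
        (∀ x ∈ verts eA, ∀ j, j ≠ i → g x j = g v j) →
        (∀ x ∈ verts eB, ∀ j, j ≠ i → g x j = g v j) →
        A ⊆ verts eA → B ⊆ verts eB →
        (fun x => Fin.castLE (hN i) (g x i)) '' A ⊆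
          (fun x => Fin.castLE (hN i) (g x i)) '' B →
        A ⊆ B := by
      intro A B eA eB hA hB hAe hBe him x hx
      obtain ⟨x', hx', hxx'⟩ := him ⟨x, hx, rfl⟩
      have hgi : g x' i = g x i := Fin.castLE_injective _ hxx'
      have hgeq : g x' = g x := by
        funext j
        by_cases hj : j = i
        · rw [hj, hgi]
        · rw [hB x' (hBe hx') j hj, hA x (hAe hx) j hj]
      have : x' = x := g.injective hgeq
      rwa [← this]
    have hsub1 : e1.1 ⊆ verts e1 := Set.subset_union_left
    have hsub2 : e1.2 ⊆ verts e1 := Set.subset_union_right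
    have hsub1' : e2.1 ⊆ verts e2 := Set.subset_union_left
    have hsub2' : e2.2 ⊆ verts e2 := Set.subset_union_right
    have h1 : e1.1 = e2.1 :=
      Set.Subset.antisymm
        (sub e1.1 e2.1 e1 e2 hagr1 hagr2 hsub1 hsub1' hS1.le)
        (sub e2.1 e1.1 e2 e1 hagr2 hagr1 hsub1' hsub1 hS1.ge)
    have h2' : e1.2 = e2.2 :=
      Set.Subset.antisymm
        (sub e1.2 e2.2 e1 e2 hagr1 hagr2 hsub2 hsub2' hS2.le)
        (sub e2.2 e1.2 e2 e1 hagr2 hagr1 hsub2' hsub2 hS2.ge)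
    exact Prod.ext h1 h2'
  have hle := Set.ncard_le_ncard_of_injOn F (fun a _ => Set.mem_univ (F a)) hinj Set.finite_univ
  rw [Set.ncard_univ] at hle
  calc H.arcs.ncard ≤ Nat.card (Fin k × (Set (Fin N) × Set (Fin N)) × V) := hle
    _ = k * (2^N * 2^N * Fintype.card V) := by
        simp [Nat.card_eq_fintype_card, Fintype.card_set, mul_assoc]

lemma pow_le_D_mul_two_pow (p : ℕ) : ∃ D : ℝ, 0 < D ∧ ∀ k : ℕ, (k:ℝ)^p ≤ D * 2^k := by
  have hlog2 : (0:ℝ) < Real.log 2 := Real.log_pos one_lt_two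
  refine ⟨(p.factorial : ℝ) / (Real.log 2)^p, by positivity, fun k => ?_⟩
  have hx : (0:ℝ) ≤ k * Real.log 2 := by positivity
  have h1 : (k * Real.log 2)^p / (p.factorial : ℝ) ≤ Real.exp (k * Real.log 2) := by
    calc (k * Real.log 2)^p / (p.factorial : ℝ)
        ≤ ∑ i ∈ Finset.range (p+1), (k * Real.log 2)^i / (i.factorial : ℝ) :=
          Finset.single_le_sum (f := fun i => (k * Real.log 2)^i / (i.factorial : ℝ))
            (fun i _ => by positivity) (Finset.self_mem_range_succ p)
      _ ≤ Real.exp (k * Real.log 2) := Real.sum_le_exp_of_nonneg hx _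
  have h2 : Real.exp ((k:ℝ) * Real.log 2) = 2^k := by
    rw [Real.exp_nat_mul, Real.exp_log two_pos]
  rw [h2, mul_pow, div_le_iff₀ (by positivity)] at h1
  rw [div_mul_eq_mul_div, le_div_iff₀ (by positivity)]
  linarith

open DiHypergraph in
theorem k_pow_log_bound (l : ℕ) :
    ∃ C : ℝ, 0 < C ∧ ∀ (V : Type) [Fintype V] (H : DiHypergraph V) (k : ℕ)
      (nf : Fin k → ℕ) (Gf : ∀ i, SimpleGraph (Fin (nf i))),
      (∀ i, 2 ≤ nf i) →
      Nonempty (twoSection H ≃g piGraph Gf) →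
      (k : ℝ) ^ l * Real.log (H.arcs.ncard) ≤ C * (Fintype.card V) := by
  classical
  obtain ⟨D, hD, hDk⟩ := pow_le_D_mul_two_pow (2*l+2)
  refine ⟨7*D + 4, by positivity, ?_⟩
  intro V _ H k nf Gf h2 hg
  obtain ⟨g⟩ := hg
  set m := H.arcs.ncard with hm_def
  set n := Fintype.card V with hn_def
  have hlogm0 : 0 ≤ Real.log m := Real.log_natCast_nonneg m
  have hn_prod : n = ∏ i, nf i := by
    rw [hn_def, Fintype.card_congr g.toEquiv]
    simp
  have h2k : 2^k ≤ n := by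
    rw [hn_prod]
    calc 2^k = ∏ _i : Fin k, 2 := by simp
      _ ≤ ∏ i, nf i := Finset.prod_le_prod' fun i _ => h2 i
  have hn1 : 1 ≤ n := le_trans (Nat.one_le_two_pow) h2k
  have hn0R : (0:ℝ) < n := by exact_mod_cast hn1
  rcases le_or_gt k 1 with hk1 | hk2
  · -- small k: generic bound m ≤ 2^n * 2^n
    have hm4 : m ≤ 2^n * 2^n := by
      have h := Set.ncard_le_ncard (Set.subset_univ H.arcs) Set.finite_univ
      rwa [Set.ncard_univ, Nat.card_eq_fintype_card, Fintype.card_prod, Fintype.card_set,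
        ← hn_def] at h
    have hkl : (k:ℝ)^l ≤ 1 := by
      interval_cases k
      · rcases Nat.eq_zero_or_pos l with rfl | hl
        · simp
        · simp [zero_pow (by omega : l ≠ 0)]
      · simp
    rcases Nat.eq_zero_or_pos m with hm0 | hm1
    · rw [hm0]; simp; positivity
    have hlogm : Real.log m ≤ 2 * n := by
      have hle : (m:ℝ) ≤ (2:ℝ)^n * 2^n := by exact_mod_cast hm4
      calc Real.log m ≤ Real.log ((2:ℝ)^n * 2^n) :=
            Real.log_le_log (by exact_mod_cast hm1) hle
        _ = n * Real.log 2 + n * Real.log 2 := by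
            rw [Real.log_mul (by positivity) (by positivity), Real.log_pow]
        _ ≤ 2 * n := by
            have := Real.log_le_sub_one_of_pos (show (0:ℝ) < 2 by norm_num)
            nlinarith [hn0R]
    calc (k:ℝ)^l * Real.log m ≤ 1 * (2*n) :=
          mul_le_mul hkl hlogm hlogm0 zero_le_one
      _ ≤ (7*D+4) * n := by
          have hDn : (0:ℝ) ≤ D * n := by positivity
          linarith
  · -- main case k ≥ 2
    have hkpos : 1 ≤ k := by omega
    have hne : (Finset.univ : Finset (Fin k)).Nonempty :=
      ⟨⟨0, by omega⟩, Finset.mem_univ _⟩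
    set N := Finset.univ.sup nf with hN_def
    have hNle : ∀ i, nf i ≤ N := fun i => Finset.le_sup (Finset.mem_univ i)
    obtain ⟨i0, -, hi0⟩ := Finset.exists_mem_eq_sup Finset.univ hne nf
    have hNn : N * 2^(k-1) ≤ n := by
      have hprod : nf i0 * ∏ j ∈ Finset.univ.erase i0, nf j = ∏ i, nf i :=
        Finset.mul_prod_erase Finset.univ nf (Finset.mem_univ i0)
      have hcard : (Finset.univ.erase i0).card = k - 1 := by
        rw [Finset.card_erase_of_mem (Finset.mem_univ i0)]
        simp
      have h2e : 2^(k-1) ≤ ∏ j ∈ Finset.univ.erase i0, nf j := by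
        calc 2^(k-1) = ∏ _j ∈ Finset.univ.erase i0, 2 := by
              rw [Finset.prod_const, hcard]
          _ ≤ _ := Finset.prod_le_prod' fun j _ => h2 j
      calc N * 2^(k-1) = nf i0 * 2^(k-1) := by rw [show N = nf i0 from hN_def.trans hi0]
        _ ≤ nf i0 * ∏ j ∈ Finset.univ.erase i0, nf j :=
            Nat.mul_le_mul_left _ h2e
        _ = ∏ i, nf i := hprod
        _ = n := hn_prod.symm
    have hm := count_lemma H Gf g hkpos h2 hNle
    rw [← hm_def, ← hn_def] at hm
    rcases Nat.eq_zero_or_pos m with hm0 | hm1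
    · rw [hm0]; simp; positivity
    -- real versions
    have hK1 : (1:ℝ) ≤ (k:ℝ) := by exact_mod_cast hkpos
    have hK0 : (0:ℝ) < (k:ℝ) := by linarith
    have h2kR : (2:ℝ)^k ≤ n := by exact_mod_cast h2k
    have hN2k : (N:ℝ) * 2^k ≤ 2 * n := by
      have : N * 2^k ≤ 2 * n := by
        have hk' : 2^k = 2^(k-1) * 2 := by
          rw [← pow_succ]
          congr 1
          omega
        calc N * 2^k = N * 2^(k-1) * 2 := by rw [hk']; ring
          _ ≤ n * 2 := Nat.mul_le_mul_right _ hNn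
          _ = 2 * n := by ring
      exact_mod_cast this
    have hmR : (m:ℝ) ≤ (k:ℝ) * (2^N * 2^N * n) := by exact_mod_cast hm
    have hlog2 : (0:ℝ) < Real.log 2 := Real.log_pos one_lt_two
    have hlog2le : Real.log 2 ≤ 1 := by
      have := Real.log_le_sub_one_of_pos (show (0:ℝ) < 2 by norm_num)
      linarith
    have hlogm : Real.log m ≤
        Real.log k + N * Real.log 2 + N * Real.log 2 + Real.log n := by
      calc Real.log m ≤ Real.log ((k:ℝ) * (2^N * 2^N * n)) :=
            Real.log_le_log (by exact_mod_cast hm1) hmR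
        _ = Real.log k + N * Real.log 2 + N * Real.log 2 + Real.log n := by
            rw [Real.log_mul (by positivity) (by positivity),
              Real.log_mul (by positivity) (by positivity),
              Real.log_mul (by positivity) (by positivity),
              Real.log_pow]
            ring
    -- powers of K
    have hKl : (k:ℝ)^l ≤ D * 2^k :=
      (pow_le_pow_right₀ hK1 (by omega : l ≤ 2*l+2)).trans (hDk k)
    have hKl1 : (k:ℝ)^(l+1) ≤ D * 2^k :=
      (pow_le_pow_right₀ hK1 (by omega : l+1 ≤ 2*l+2)).trans (hDk k)
    have hKl2 : ((k:ℝ)^l)^2 ≤ D * 2^k := by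
      rw [← pow_mul]
      exact (pow_le_pow_right₀ hK1 (by omega : l*2 ≤ 2*l+2)).trans (hDk k)
    have hKlpos : (0:ℝ) ≤ (k:ℝ)^l := by positivity
    -- A1
    have hA1 : (k:ℝ)^l * Real.log k ≤ D * n := by
      have hlogK : Real.log k ≤ (k:ℝ) := by
        have := Real.log_le_sub_one_of_pos hK0
        linarith
      calc (k:ℝ)^l * Real.log k ≤ (k:ℝ)^l * k :=
            mul_le_mul_of_nonneg_left hlogK hKlpos
        _ = (k:ℝ)^(l+1) := (pow_succ _ _).symm
        _ ≤ D * 2^k := hKl1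
        _ ≤ D * n := by nlinarith
    -- A2
    have hA2 : (k:ℝ)^l * ((N:ℝ) * Real.log 2) ≤ 2 * D * n := by
      have h1 : (k:ℝ)^l * ((N:ℝ) * Real.log 2) ≤ (D * 2^k) * ((N:ℝ) * Real.log 2) :=
        mul_le_mul_of_nonneg_right hKl (by positivity)
      have h2' : (D * 2^k) * ((N:ℝ) * Real.log 2) ≤ D * (2*n) * 1 := by
        have hNpos : (0:ℝ) ≤ (N:ℝ) * 2^k := by positivity
        nlinarith [mul_le_mul hN2k hlog2le (le_of_lt hlog2) (by positivity : (0:ℝ) ≤ 2*n)]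
      linarith
    -- A3
    have hA3 : (k:ℝ)^l * Real.log n ≤ (D + 4)/2 * n := by
      have hlogn0 : 0 ≤ Real.log n := Real.log_natCast_nonneg n
      have hsq : (Real.log n)^2 ≤ 4 * n := by
        have hs0 : (0:ℝ) < Real.sqrt n := Real.sqrt_pos.mpr hn0R
        have hls : Real.log n ≤ 2 * Real.sqrt n := by
          conv_lhs => rw [← Real.sq_sqrt (le_of_lt hn0R)]
          rw [Real.log_pow]
          have := Real.log_le_sub_one_of_pos hs0
          push_cast
          linarith
        calc (Real.log n)^2 ≤ (2 * Real.sqrt n)^2 := by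
              apply pow_le_pow_left₀ hlogn0 hls
          _ = 4 * (Real.sqrt n ^ 2) := by ring
          _ = 4 * n := by rw [Real.sq_sqrt (le_of_lt hn0R)]
      have h2ab := two_mul_le_add_sq ((k:ℝ)^l) (Real.log n)
      have h2k' : ((k:ℝ)^l)^2 ≤ D * n :=
        hKl2.trans (mul_le_mul_of_nonneg_left h2kR hD.le)
      linarith
    calc (k:ℝ)^l * Real.log m
        ≤ (k:ℝ)^l * (Real.log k + N * Real.log 2 + N * Real.log 2 + Real.log n) :=
          mul_le_mul_of_nonneg_left hlogm hKlpos
      _ = (k:ℝ)^l * Real.log k + (k:ℝ)^l * ((N:ℝ) * Real.log 2)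
          + (k:ℝ)^l * ((N:ℝ) * Real.log 2) + (k:ℝ)^l * Real.log n := by ring
      _ ≤ D*n + 2*D*n + 2*D*n + (D+4)/2 * n := by linarith
      _ ≤ (7*D+4) * n := by
          have hDn : (0:ℝ) ≤ D * n := by positivity
          linarith
end

section
/- Let H be a directed hypergraph with a pre-coordinatization Υ coming from the prime factorization of [H]_2 into factors indexed by I, and suppose H ≅ □_{j∈J} H_j is any factorization of H. Then there is a partition {I_j}_{j∈J} of I such that [H_j]_2 ≅ □_{i∈I_j} G_i for each j∈J, where □_{i∈I} G_i is the prime factorization of [H]_2. -/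
section PiGraphWalks

open DiHypergraph SimpleGraph

variable {K : Type} {Uf : K → Type} {Rf : ∀ k, SimpleGraph (Uf k)}

lemma piGraph_adj {x y : ∀ k, Uf k} :
    (piGraph Rf).Adj x y ↔ ∃ k, (Rf k).Adj (x k) (y k) ∧ ∀ k', k' ≠ k → x k' = y k' :=
  Iff.rfl

variable [DecidableEq K]

/-- Split a walk: the k-projection plus a walk from the k-mixed vertex. -/
lemma piGraph_split {u v : ∀ k, Uf k} (W : (piGraph Rf).Walk u v) (k : K) :
    ∃ (p : (Rf k).Walk (u k) (v k))
      (W2 : (piGraph Rf).Walk (Function.update u k (v k)) v),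
      p.length + W2.length = W.length := by
  induction W with
  | nil =>
    exact ⟨.nil, (SimpleGraph.Walk.nil).copy (Function.update_eq_self _ _).symm rfl, by simp⟩
  | @cons u x v h W' ih =>
    obtain ⟨k', hadj, hoth⟩ := id h
    obtain ⟨p', W2', hlen⟩ := ih
    by_cases hk : k' = k
    · subst hk
      refine ⟨SimpleGraph.Walk.cons hadj p', W2'.copy ?_ rfl, ?_⟩
      · funext j
        by_cases hj : j = k'
        · subst hj; simp
        · simp [Function.update_of_ne hj, hoth j hj]
      · simp [SimpleGraph.Walk.length_cons] at hlen ⊢; omega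
    · have hux : u k = x k := hoth k (fun h => hk h.symm)
      refine ⟨p'.copy hux.symm rfl, SimpleGraph.Walk.cons ?_ W2', ?_⟩
      · refine ⟨k', ?_, ?_⟩
        · simpa [Function.update_of_ne (fun h => hk h)] using hadj
        · intro j hj
          by_cases hjk : j = k
          · subst hjk; simp
          · simp [Function.update_of_ne hjk, hoth j hj]
      · show (p'.copy _ _).length + (W2'.length + 1) = W'.length + 1
        rw [SimpleGraph.Walk.length_copy]; omega

/-- Lift a factor walk into the product, changing only coordinate k. -/
lemma piGraph_lift {k : K} {a b : Uf k} (p : (Rf k).Walk a b) :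
    ∀ (u : ∀ k, Uf k), u k = a →
    ∃ W : (piGraph Rf).Walk u (Function.update u k b), W.length = p.length := by
  induction p with
  | nil =>
    intro u hu
    exact ⟨(SimpleGraph.Walk.nil).copy rfl (by rw [← hu, Function.update_eq_self]), by simp⟩
  | @cons a a' b hadj p' ih =>
    intro u hu
    obtain ⟨W', hW'⟩ := ih (Function.update u k a') (by simp)
    refine ⟨SimpleGraph.Walk.cons ⟨k, by simpa [hu] using hadj,
      fun j hj => (Function.update_of_ne hj _ _).symm⟩
      (W'.copy rfl (by rw [Function.update_idem])), ?_⟩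
    show (W'.copy _ _).length + 1 = p'.length + 1
    simp [hW']

/-- endpoints of a walk differ in finitely many coordinates. -/
lemma piGraph_walk_diff {u v : ∀ k, Uf k} (W : (piGraph Rf).Walk u v) :
    ∃ s : Finset K, ∀ k, u k ≠ v k → k ∈ s := by
  induction W with
  | nil => exact ⟨∅, fun k hk => absurd rfl hk⟩
  | @cons u x v h W' ih =>
    obtain ⟨k', hadj, hoth⟩ := h
    obtain ⟨s', hs'⟩ := ih
    refine ⟨insert k' s', fun k hk => ?_⟩
    by_cases hkk : k = k'
    · simp [hkk]
    · have : x k ≠ v k := by rw [← hoth k hkk]; exact hk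
      exact Finset.mem_insert_of_mem (hs' k this)

/-- A factor of a preconnected nonempty product is preconnected. -/
lemma piGraph_factor_preconnected (hne : Nonempty (∀ k, Uf k))
    (hpre : (piGraph Rf).Preconnected) (k : K) : (Rf k).Preconnected := by
  intro a b
  obtain ⟨w0⟩ := hne
  have hr := hpre (Function.update w0 k a) (Function.update w0 k b)
  obtain ⟨W⟩ := hr
  obtain ⟨p, _, _⟩ := piGraph_split W k
  have : (Rf k).Reachable ((Function.update w0 k a) k) ((Function.update w0 k b) k) := ⟨p⟩
  simpa using this

/-- Existence of a minimal-length walk. -/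
lemma exists_min_walk {V : Type} {G : SimpleGraph V} {u v : V} (h : G.Reachable u v) :
    ∃ W : G.Walk u v, ∀ W' : G.Walk u v, W.length ≤ W'.length := by
  obtain ⟨W, hW⟩ := h.exists_walk_length_eq_dist
  exact ⟨W, fun W' => hW ▸ SimpleGraph.dist_le W'⟩

/-- Minimal walks between two vertices of a layer stay in the layer. -/
lemma min_walk_support {u v : ∀ k, Uf k} (W : (piGraph Rf).Walk u v)
    (hmin : ∀ W' : (piGraph Rf).Walk u v, W.length ≤ W'.length) (k : K)
    (hagree : ∀ k' ≠ k, u k' = v k') :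
    ∀ s ∈ W.support, ∀ k' ≠ k, s k' = u k' := by
  induction W with
  | nil => intro s hs; simp at hs; subst hs; intro k' _; rfl
  | @cons u x v h W' ih =>
    obtain ⟨k1, hadj, hoth⟩ := id h
    by_cases hk1 : k1 = k
    · subst hk1
      have hxv : ∀ k' ≠ k1, x k' = v k' := fun k' hk' => (hoth k' hk').symm.trans (hagree k' hk')
      have hmin' : ∀ W2 : (piGraph Rf).Walk x v, W'.length ≤ W2.length := by
        intro W2
        have := hmin (SimpleGraph.Walk.cons h W2)
        simp [SimpleGraph.Walk.length_cons] at this; omega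
      intro s hs
      rw [SimpleGraph.Walk.support_cons] at hs
      rcases List.mem_cons.mp hs with rfl | hs
      · intro k' _; rfl
      · intro k' hk'
        rw [ih hmin' hxv s hs k' hk', hoth k' hk']
    · exfalso
      obtain ⟨p', W2', hlen⟩ := piGraph_split W' k
      have hux : u k = x k := hoth k (fun h => hk1 h.symm)
      obtain ⟨W'', hW''⟩ := piGraph_lift p' u hux
      have hv : Function.update u k (v k) = v := by
        funext j
        by_cases hj : j = k
        · subst hj; simp
        · simp [Function.update_of_ne hj, hagree j hj]
      have := hmin (W''.copy rfl hv)
      simp [SimpleGraph.Walk.length_copy, hW'', SimpleGraph.Walk.length_cons] at this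
      omega

end PiGraphWalks
section Mix

open DiHypergraph SimpleGraph

variable {K : Type} {Uf : K → Type} {K' : Type} {Uf' : K' → Type}
  {Rf : ∀ k, SimpleGraph (Uf k)} {Rf' : ∀ k, SimpleGraph (Uf' k)}
  [DecidableEq K] [DecidableEq K']

/-- The layer through `c` in coordinate `k`. -/
def pLayer (k : K) (c : ∀ k, Uf k) : Set (∀ k, Uf k) := {z | ∀ k' ≠ k, z k' = c k'}

lemma mix_closed (e : (∀ k, Uf k) ≃ (∀ k', Uf' k'))
    (he : ∀ x y, (piGraph Rf).Adj x y ↔ (piGraph Rf').Adj (e x) (e y))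
    (hpre : (piGraph Rf).Preconnected) (k : K) (c : ∀ k, Uf k) :
    ∀ x ∈ e '' pLayer k c, ∀ y ∈ e '' pLayer k c, ∀ k2,
      Function.update x k2 (y k2) ∈ e '' pLayer (Uf := Uf) k c := by
  rintro x ⟨u, hu, rfl⟩ y ⟨v, hv, rfl⟩ k2
  -- the graph isomorphism
  let ι : piGraph Rf ≃g piGraph Rf' := ⟨e, by intro a b; exact (he a b).symm⟩
  have hιe : ∀ z, ι z = e z := fun _ => rfl
  have hsymm : ∀ z, ι.symm z = e.symm z := fun _ => rfl
  obtain ⟨W, hmin⟩ := exists_min_walk (hpre u v)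
  set x := e u
  set y := e v
  let WB : (piGraph Rf').Walk x y := W.map ι.toHom
  have hWBlen : WB.length = W.length := by
    show (W.map ι.toHom).length = W.length
    rw [SimpleGraph.Walk.length_map]
  have hpull : ∀ Z : (piGraph Rf').Walk x y, W.length ≤ Z.length := by
    intro Z
    have : ((Z.map ι.symm.toHom).copy (e.symm_apply_apply u) (e.symm_apply_apply v)).length
        = Z.length := by
      exact (SimpleGraph.Walk.length_copy _ _ _).trans (SimpleGraph.Walk.length_map _ _)
    calc W.length ≤ _ := hmin _
    _ = Z.length := this
  obtain ⟨p, W2, hlen⟩ := piGraph_split WB k2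
  obtain ⟨W1, hW1len⟩ := piGraph_lift p x rfl
  let Wnew : (piGraph Rf').Walk x y := W1.append W2
  have hWnewlen : Wnew.length = W.length := by
    rw [SimpleGraph.Walk.length_append, hW1len, hlen, hWBlen]
  -- pull Wnew back
  let WA : (piGraph Rf).Walk u v :=
    (Wnew.map ι.symm.toHom).copy (e.symm_apply_apply u) (e.symm_apply_apply v)
  have hWAlen : WA.length = W.length := by
    exact (SimpleGraph.Walk.length_copy _ _ _).trans
      ((SimpleGraph.Walk.length_map _ _).trans hWnewlen)
  have hWAmin : ∀ W' : (piGraph Rf).Walk u v, WA.length ≤ W'.length := by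
    intro W'; rw [hWAlen]; exact hmin W'
  have hsupp := min_walk_support WA hWAmin k (fun k' hk' => (hu k' hk').trans (hv k' hk').symm)
  -- the mixed vertex is on Wnew
  have hwmem : Function.update x k2 (y k2) ∈ Wnew.support := by
    have : Function.update x k2 (y k2) ∈ W1.support := SimpleGraph.Walk.end_mem_support W1
    rw [SimpleGraph.Walk.mem_support_append_iff]
    exact Or.inl this
  have hmemA : e.symm (Function.update x k2 (y k2)) ∈ WA.support := by
    have : WA.support = (Wnew.support).map ι.symm.toHom := by
      exact (SimpleGraph.Walk.support_copy _ _ _).trans (SimpleGraph.Walk.support_map _ _)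
    rw [this]
    exact List.mem_map_of_mem hwmem
  have hlayer : e.symm (Function.update x k2 (y k2)) ∈ pLayer (Uf := Uf) k c := by
    intro k' hk'
    rw [hsupp _ hmemA k' hk', hu k' hk']
  exact ⟨_, hlayer, e.apply_symm_apply _⟩

end Mix
section Hcore

open DiHypergraph SimpleGraph

variable {I J : Type} {Vf : I → Type} {Wf : J → Type}
  {Gf : ∀ i, SimpleGraph (Vf i)} {Qf : ∀ j, SimpleGraph (Wf j)}
  [DecidableEq I] [DecidableEq J]

lemma update_adj_iff {c : ∀ i, Vf i} {i : I} {t t' : Vf i} :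
    (piGraph Gf).Adj (Function.update c i t) (Function.update c i t') ↔ (Gf i).Adj t t' := by
  constructor
  · rintro ⟨i1, hadj, hoth⟩
    by_cases hi : i1 = i
    · subst hi; simpa using hadj
    · exfalso
      have : Function.update c i t i1 = Function.update c i t' i1 := by
        simp [Function.update_of_ne hi]
      rw [this] at hadj
      exact (Gf i1).loopless.irrefl _ hadj
  · intro h
    refine ⟨i, by simpa using h, fun j hj => by simp [Function.update_of_ne hj]⟩

/-- In every hyperlayer (pullback of a coordinate layer), all vertices agree
outside of a single coordinate `j0`. -/
lemma layer_single_coord (Ψ : (∀ j, Wf j) ≃ (∀ i, Vf i))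
    (hΨ : ∀ x y, (piGraph Qf).Adj x y ↔ (piGraph Gf).Adj (Ψ x) (Ψ y))
    (hpreG : (piGraph Gf).Preconnected)
    (c : ∀ i, Vf i) (i : I) (hprime : (Gf i).IsPrimeCart) :
    ∃ j0 : J, ∀ u ∈ Ψ.symm '' pLayer i c, ∀ v ∈ Ψ.symm '' pLayer i c,
      ∀ j ≠ j0, u j = v j := by
  set S : Set (∀ j, Wf j) := Ψ.symm '' pLayer i c with hS
  have hmix : ∀ x ∈ S, ∀ y ∈ S, ∀ j, Function.update x j (y j) ∈ S := by
    intro x hx y hy j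
    exact mix_closed Ψ.symm
      (fun x y => by rw [hΨ (Ψ.symm x) (Ψ.symm y)]; simp) hpreG i c x hx y hy j
  -- the canonical parametrization of the layer
  set θ : Vf i → (∀ j, Wf j) := fun t => Ψ.symm (Function.update c i t) with hθ
  have hθS : ∀ t, θ t ∈ S := fun t => ⟨_, fun i' hi' => Function.update_of_ne hi' _ _, rfl⟩
  have hSθ : ∀ u ∈ S, θ ((Ψ u) i) = u := by
    rintro u ⟨x, hx, rfl⟩
    have : Function.update c i (x i) = x := by
      funext i'
      by_cases hi' : i' = i
      · subst hi'; simp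
      · rw [Function.update_of_ne hi', hx i' hi']
    simp [hθ, this]
  have hθinj : Function.Injective θ := fun t t' h => by
    have := congrArg (fun u => (Ψ u) i) h
    simpa [hθ] using this
  obtain ⟨a, b, hab⟩ := hprime.1
  have hθab : θ a ≠ θ b := fun h => hab (hθinj h)
  obtain ⟨j0, hj0⟩ := Function.ne_iff.mp hθab
  refine ⟨j0, ?_⟩
  by_contra hcon
  push_neg at hcon
  obtain ⟨u, hu, v, hv, j1, hj1, huv⟩ := hcon
  -- build a nontrivial product decomposition of `Gf i`
  apply hprime.2
  set β := ↥((fun u => u j0) '' S)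
  set γ := ↥((fun u => (fun j' : {j : J // j ≠ j0} => u j'.1)) '' S)
  set G1 : SimpleGraph β :=
    { Adj := fun p p' => (Qf j0).Adj p.1 p'.1
      symm := ⟨fun p p' h => (Qf j0).adj_symm h⟩
      loopless := ⟨fun p h => (Qf j0).loopless.irrefl _ h⟩ } with hG1
  set G2 : SimpleGraph γ :=
    { Adj := fun r r' => (piGraph (fun j' : {j : J // j ≠ j0} => Qf j'.1)).Adj r.1 r'.1
      symm := ⟨fun r r' h => (piGraph _).adj_symm h⟩
      loopless := ⟨fun r h => (piGraph _).loopless.irrefl _ h⟩ } with hG2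
  refine ⟨β, γ, G1, G2, ?_, ?_, ?_⟩
  · exact ⟨⟨θ a j0, ⟨θ a, hθS a, rfl⟩⟩, ⟨θ b j0, ⟨θ b, hθS b, rfl⟩⟩,
      fun h => hj0 (congrArg Subtype.val h)⟩
  · refine ⟨⟨_, ⟨u, hu, rfl⟩⟩, ⟨_, ⟨v, hv, rfl⟩⟩, fun h => huv ?_⟩
    have := congrArg (fun r => r ⟨j1, hj1⟩) (congrArg Subtype.val h)
    simpa using this
  · -- the isomorphism
    constructor
    classical
    -- representatives
    set repg : γ → (∀ j, Wf j) := fun r => r.2.choose with hrepg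
    have hrepgS : ∀ r : γ, repg r ∈ S := fun r => r.2.choose_spec.1
    have hrepgV : ∀ (r : γ) (j' : {j : J // j ≠ j0}), repg r j'.1 = r.1 j' := by
      intro r j'
      have := r.2.choose_spec.2
      exact congrFun this j'
    set repb : β → (∀ j, Wf j) := fun p => p.2.choose with hrepb
    have hrepbS : ∀ p : β, repb p ∈ S := fun p => p.2.choose_spec.1
    have hrepbV : ∀ p : β, repb p j0 = p.1 := fun p => p.2.choose_spec.2
    set m : β × γ → (∀ j, Wf j) := fun pr => Function.update (repg pr.2) j0 pr.1.1
      with hm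
    have hmS : ∀ pr, m pr ∈ S := by
      intro pr
      have := hmix (repg pr.2) (hrepgS pr.2) (repb pr.1) (hrepbS pr.1) j0
      rwa [hrepbV pr.1] at this
    have hmj0 : ∀ pr, m pr j0 = pr.1.1 := fun pr => Function.update_self _ _ _
    have hmoth : ∀ (pr) (j' : {j : J // j ≠ j0}), m pr j'.1 = pr.2.1 j' := by
      intro pr j'
      rw [hm]
      simp only
      rw [Function.update_of_ne j'.2, hrepgV]
    refine { toFun := fun t => (⟨θ t j0, ⟨θ t, hθS t, rfl⟩⟩, ⟨_, ⟨θ t, hθS t, rfl⟩⟩)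
             invFun := fun pr => (Ψ (m pr)) i
             left_inv := ?_, right_inv := ?_, map_rel_iff' := ?_ }
    · intro t
      have h2 : (Ψ (θ t)) i = t := by simp [hθ]
      refine Eq.trans (congrArg (fun z => (Ψ z) i) ?_) h2
      funext j
      by_cases hj : j = j0
      · subst hj; exact hmj0 _
      · exact hmoth _ ⟨j, hj⟩
    · intro pr
      have hθm : θ ((Ψ (m pr)) i) = m pr := hSθ _ (hmS pr)
      refine Prod.ext ?_ ?_
      · apply Subtype.ext
        show θ ((Ψ (m pr)) i) j0 = pr.1.1
        rw [hθm]; exact hmj0 pr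
      · apply Subtype.ext
        funext j'
        show θ ((Ψ (m pr)) i) j'.1 = pr.2.1 j'
        rw [hθm]; exact hmoth pr j'
    · intro t t'
      show (G1.boxProd G2).Adj _ _ ↔ _
      rw [SimpleGraph.boxProd_adj]
      have key : (piGraph Qf).Adj (θ t) (θ t') ↔ (Gf i).Adj t t' := by
        rw [hΨ]
        simp only [hθ, Equiv.apply_symm_apply]
        exact update_adj_iff
      rw [← key]
      constructor
      · rintro (⟨hadj, heq⟩ | ⟨hadj, heq⟩)
        · refine ⟨j0, hadj, fun j hj => ?_⟩
          have := congrArg (fun r => r ⟨j, hj⟩) (congrArg Subtype.val heq)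
          simpa using this
        · obtain ⟨j1, hadj1, hoth1⟩ := hadj
          refine ⟨j1.1, hadj1, fun j hj => ?_⟩
          by_cases hjj0 : j = j0
          · subst hjj0
            exact congrArg Subtype.val heq
          · refine hoth1 ⟨j, hjj0⟩ (fun h => hj ?_)
            exact congrArg Subtype.val h
      · rintro ⟨j1, hadj1, hoth1⟩
        by_cases hjj0 : j1 = j0
        · subst hjj0
          refine Or.inl ⟨hadj1, ?_⟩
          apply Subtype.ext
          funext j'
          exact hoth1 j'.1 j'.2
        · refine Or.inr ⟨⟨⟨j1, hjj0⟩, hadj1, fun j'' hj'' => ?_⟩, ?_⟩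
          · exact hoth1 j''.1 (fun h => hj'' (Subtype.ext h))
          · apply Subtype.ext
            exact hoth1 j0 (fun h => hjj0 h.symm)

end Hcore
section Square

/-- Opposite edges of a square in a product have the same color. -/
lemma square_colors {J : Type} {Wf : J → Type} {a b a' b' : ∀ j, Wf j} {j1 j2 j3 j4 : J}
    (hab : ∀ j ≠ j1, a j = b j) (ha'b' : ∀ j ≠ j2, a' j = b' j)
    (haa' : ∀ j ≠ j3, a j = a' j) (hbb' : ∀ j ≠ j4, b j = b' j)
    (hab' : a ≠ b') (hba' : b ≠ a')
    (hj1 : a j1 ≠ b j1) (hj2 : a' j2 ≠ b' j2) : j1 = j2 := by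
  by_contra h12
  by_cases h34 : j3 = j4
  · subst h34
    -- a', b' agree off {j3, j1}
    have h2mem : j2 = j3 ∨ j2 = j1 := by
      by_contra h
      push_neg at h
      exact hj2 (((haa' j2 h.1).symm.trans (hab j2 h.2)).trans (hbb' j2 h.1))
      -- a' j2 = a j2 = b j2 = b' j2
    have h2 : j2 = j3 := h2mem.resolve_right (fun h => h12 h.symm)
    subst h2
    -- then a, b agree off j2
    have : ∀ j ≠ j2, a j = b j := by
      intro j hj
      exact (haa' j hj).trans ((ha'b' j hj).trans (hbb' j hj).symm)
    exact hj1 (by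
      have := this j1 (fun h => h12 h)
      exact this)
  · -- j3 ≠ j4 : impossible
    obtain ⟨js, hjs⟩ := Function.ne_iff.mp hab'
    obtain ⟨jt, hjt⟩ := Function.ne_iff.mp hba'
    have hjs1 : js = j1 ∨ js = j4 := by
      by_contra h; push_neg at h
      exact hjs ((hab js h.1).trans (hbb' js h.2))
    have hjs2 : js = j3 ∨ js = j2 := by
      by_contra h; push_neg at h
      exact hjs ((haa' js h.1).trans (ha'b' js h.2))
    have hjt1 : jt = j1 ∨ jt = j3 := by
      by_contra h; push_neg at h
      exact hjt ((hab jt h.1).symm.trans (haa' jt h.2))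
    have hjt2 : jt = j4 ∨ jt = j2 := by
      by_contra h; push_neg at h
      exact hjt ((hbb' jt h.1).trans (ha'b' jt h.2).symm)
    have d1 : j1 = j3 ∨ j2 = j4 := by
      rcases hjs1 with rfl | rfl
      · rcases hjs2 with h | h
        · exact Or.inl h
        · exact absurd h h12
      · rcases hjs2 with h | h
        · exact absurd h.symm h34
        · exact Or.inr h.symm
    have d2 : j1 = j4 ∨ j2 = j3 := by
      rcases hjt1 with rfl | rfl
      · rcases hjt2 with h | h
        · exact Or.inl h
        · exact absurd h h12
      · rcases hjt2 with h | h
        · exact absurd h h34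
        · exact Or.inr h.symm
    rcases d1 with h | h <;> rcases d2 with h' | h'
    · exact h34 (h.symm.trans h')
    · exact h12 (h.trans h'.symm)
    · exact h12 (h'.trans h.symm)
    · exact h34 (h'.symm.trans h)

end Square
section Main

open DiHypergraph SimpleGraph

lemma reachable_transfer {α β : Type} {G1 : SimpleGraph α} {G2 : SimpleGraph β}
    (e : α ≃ β) (he : ∀ x y, G1.Adj x y ↔ G2.Adj (e x) (e y)) {u v : α}
    (h : G1.Reachable u v) : G2.Reachable (e u) (e v) := by
  obtain ⟨W⟩ := h
  induction W with
  | nil => exact SimpleGraph.Reachable.refl _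
  | cons hadj W' ih => exact (((he _ _).mp hadj).reachable).trans ih

lemma exists_adj {α : Type} {G : SimpleGraph α} (hpre : G.Preconnected)
    {x y : α} (hxy : x ≠ y) : ∃ a b : α, G.Adj a b := by
  obtain ⟨W⟩ := hpre x y
  cases W with
  | nil => exact absurd rfl hxy
  | cons h _ => exact ⟨_, _, h⟩

theorem graph_main {I J : Type} {Vf : I → Type} {Wf : J → Type}
    (Gf : ∀ i, SimpleGraph (Vf i)) (hGprime : ∀ i, (Gf i).IsPrimeCart)
    (Qf : ∀ j, SimpleGraph (Wf j))
    (Ψ : (∀ j, Wf j) ≃ (∀ i, Vf i))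
    (hΨ : ∀ x y, (piGraph Qf).Adj x y ↔ (piGraph Gf).Adj (Ψ x) (Ψ y))
    (hpre : (piGraph Qf).Preconnected) (hne : Nonempty (∀ j, Wf j)) :
    ∃ P : I → J, ∀ j, Nonempty (Qf j ≃g piGraph (fun i : {i : I // P i = j} => Gf i.1)) := by
  classical
  obtain ⟨a0⟩ := hne
  set b0 : ∀ i, Vf i := Ψ a0 with hb0
  -- preconnectedness on the G side
  have hpreG : (piGraph Gf).Preconnected := by
    intro x y
    have := reachable_transfer Ψ hΨ (hpre (Ψ.symm x) (Ψ.symm y))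
    simpa using this
  -- the coordinate color of each hyperlayer
  have hLSC := fun (c : ∀ i, Vf i) (i : I) =>
    layer_single_coord Ψ hΨ hpreG c i (hGprime i)
  set F : (∀ i, Vf i) → I → J := fun c i => (hLSC c i).choose with hFdef
  have hF : ∀ c i, ∀ u ∈ Ψ.symm '' pLayer i c, ∀ v ∈ Ψ.symm '' pLayer i c,
      ∀ j ≠ F c i, u j = v j := fun c i => (hLSC c i).choose_spec
  -- uniqueness of the layer color
  have Funiq : ∀ c i j', (∀ u ∈ Ψ.symm '' pLayer i c, ∀ v ∈ Ψ.symm '' pLayer i c,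
      ∀ j ≠ j', u j = v j) → j' = F c i := by
    intro c i j' hj'
    by_contra hne'
    obtain ⟨a, b, hab⟩ := (hGprime i).1
    have hmem : ∀ t : Vf i, Function.update c i t ∈ pLayer (Uf := Vf) i c :=
      fun t i' hi' => Function.update_of_ne hi' _ _
    set u1 := Ψ.symm (Function.update c i a)
    set u2 := Ψ.symm (Function.update c i b)
    have hu1 : u1 ∈ Ψ.symm '' pLayer i c := ⟨_, hmem a, rfl⟩
    have hu2 : u2 ∈ Ψ.symm '' pLayer i c := ⟨_, hmem b, rfl⟩
    have hu12 : u1 ≠ u2 := by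
      intro h
      have := Ψ.symm.injective h
      exact hab (by simpa using congrFun this i)
    obtain ⟨j, hj⟩ := Function.ne_iff.mp hu12
    have hjF : j = F c i := by
      by_contra h
      exact hj (hF c i u1 hu1 u2 hu2 j h)
    rw [hjF] at hj
    exact hj (hj' u1 hu1 u2 hu2 _ (fun h => hne' h.symm))
  -- each factor graph has an edge
  have hedge : ∀ i : I, ∃ a b : Vf i, (Gf i).Adj a b := by
    intro i
    obtain ⟨x, y, hxy⟩ := (hGprime i).1
    exact exists_adj (piGraph_factor_preconnected ⟨b0⟩ hpreG i) hxy
  -- constancy of the layer color along edges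
  have hGC : ∀ c c' : ∀ i, Vf i, (piGraph Gf).Adj c c' → ∀ i, F c i = F c' i := by
    intro c c' hcc' i
    obtain ⟨i0, hadj0, hoth0⟩ := hcc'
    by_cases hi : i0 = i
    · subst hi
      have hlay : pLayer (Uf := Vf) i0 c = pLayer i0 c' := by
        ext z
        constructor <;> intro hz i' hi'
        · rw [hz i' hi', hoth0 i' hi']
        · rw [hz i' hi', ← hoth0 i' hi']
      refine (Funiq c i0 (F c' i0) ?_).symm
      rw [hlay]
      exact hF c' i0
    · -- transport across a square
      obtain ⟨x0, y0, hxy0⟩ := hedge i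
      set x := Function.update c i x0 with hx
      set y := Function.update c i y0 with hy
      set x' := Function.update x i0 (c' i0) with hx'
      set y' := Function.update y i0 (c' i0) with hy'
      have hxL : x ∈ pLayer (Uf := Vf) i c := fun i' hi' => Function.update_of_ne hi' _ _
      have hyL : y ∈ pLayer (Uf := Vf) i c := fun i' hi' => Function.update_of_ne hi' _ _
      have hx'L : x' ∈ pLayer (Uf := Vf) i c' := by
        intro i' hi'
        by_cases h0 : i' = i0
        · subst h0; simp [hx']
        · rw [hx', Function.update_of_ne h0, hx, Function.update_of_ne hi', hoth0 i' h0]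
      have hy'L : y' ∈ pLayer (Uf := Vf) i c' := by
        intro i' hi'
        by_cases h0 : i' = i0
        · subst h0; simp [hy']
        · rw [hy', Function.update_of_ne h0, hy, Function.update_of_ne hi', hoth0 i' h0]
      have hxyadj : (piGraph Gf).Adj x y := update_adj_iff.mpr hxy0
      have hxx' : (piGraph Gf).Adj x x' := by
        refine ⟨i0, ?_, fun i' hi' => (Function.update_of_ne hi' _ _).symm⟩
        rw [hx', Function.update_self, hx, Function.update_of_ne hi]
        exact hadj0
      have hyy' : (piGraph Gf).Adj y y' := by
        refine ⟨i0, ?_, fun i' hi' => (Function.update_of_ne hi' _ _).symm⟩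
        rw [hy', Function.update_self, hy, Function.update_of_ne hi]
        exact hadj0
      have hx'y' : (piGraph Gf).Adj x' y' := by
        refine ⟨i, ?_, ?_⟩
        · rw [hx', Function.update_of_ne (fun h => hi h.symm),
            hy', Function.update_of_ne (fun h => hi h.symm),
            hx, Function.update_self, hy, Function.update_self]
          exact hxy0
        · intro i' hi'
          by_cases h0 : i' = i0
          · subst h0; simp [hx', hy']
          · rw [hx', Function.update_of_ne h0, hy', Function.update_of_ne h0,
              hx, Function.update_of_ne hi', hy, Function.update_of_ne hi']
      -- colors of the horizontal edges
      have hdiff : ∀ {p q : ∀ i, Vf i} (cc : ∀ i, Vf i),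
          p ∈ pLayer (Uf := Vf) i cc → q ∈ pLayer (Uf := Vf) i cc → p ≠ q →
          (∀ j ≠ F cc i, Ψ.symm p j = Ψ.symm q j) ∧
            Ψ.symm p (F cc i) ≠ Ψ.symm q (F cc i) := by
        intro p q cc hp hq hpq
        have h1 : ∀ j ≠ F cc i, Ψ.symm p j = Ψ.symm q j :=
          hF cc i _ ⟨p, hp, rfl⟩ _ ⟨q, hq, rfl⟩
        refine ⟨h1, ?_⟩
        have : Ψ.symm p ≠ Ψ.symm q := fun h => hpq (Ψ.symm.injective h)
        obtain ⟨j, hj⟩ := Function.ne_iff.mp this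
        have : j = F cc i := by
          by_contra h
          exact hj (h1 j h)
        exact this ▸ hj
      have hxney : x ≠ y := by
        intro h
        exact hxy0.ne (by simpa [hx, hy] using congrFun h i)
      have hx'ney' : x' ≠ y' := by
        intro h
        have := congrFun h i
        rw [hx', Function.update_of_ne (fun h => hi h.symm),
          hy', Function.update_of_ne (fun h => hi h.symm),
          hx, Function.update_self, hy, Function.update_self] at this
        exact hxy0.ne this
      obtain ⟨hab, hj1⟩ := hdiff c hxL hyL hxney
      obtain ⟨ha'b', hj2⟩ := hdiff c' hx'L hy'L hx'ney'
      -- colors of the vertical edges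
      obtain ⟨j3, _, hoth3⟩ := (hΨ (Ψ.symm x) (Ψ.symm x')).mpr (by simpa using hxx')
      obtain ⟨j4, _, hoth4⟩ := (hΨ (Ψ.symm y) (Ψ.symm y')).mpr (by simpa using hyy')
      have hcne : c i0 ≠ c' i0 := hadj0.ne
      have hab' : Ψ.symm x ≠ Ψ.symm y' := by
        intro h
        have := congrFun (Ψ.symm.injective h) i0
        rw [hx, Function.update_of_ne hi, hy', Function.update_self] at this
        exact hcne this
      have hba' : Ψ.symm y ≠ Ψ.symm x' := by
        intro h
        have := congrFun (Ψ.symm.injective h) i0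
        rw [hy, Function.update_of_ne hi, hx', Function.update_self] at this
        exact hcne this
      exact square_colors hab ha'b' (fun j hj => hoth3 j hj) (fun j hj => hoth4 j hj)
        hab' hba' hj1 hj2
  -- the global partition
  refine ⟨fun i => F b0 i, ?_⟩
  have hFconst : ∀ c i, F c i = F b0 i := by
    have hwalk : ∀ (u v : ∀ i, Vf i) (W : (piGraph Gf).Walk u v) (i : I), F u i = F v i := by
      intro u v W i
      induction W with
      | nil => rfl
      | cons h W' ih => exact (hGC _ _ h i).trans ih
    intro c i
    obtain ⟨W⟩ := hpreG c b0
    exact hwalk c b0 W i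
  -- finiteness of I
  have hxne : ∀ i, ∃ t : Vf i, t ≠ b0 i := by
    intro i
    obtain ⟨a, b, hab⟩ := (hGprime i).1
    by_cases h : a = b0 i
    · exact ⟨b, fun hb => hab (h.trans hb.symm)⟩
    · exact ⟨a, h⟩
  choose x1 hx1 using hxne
  have hfinI : Finite I := by
    obtain ⟨Wd⟩ := hpreG b0 x1
    obtain ⟨s, hs⟩ := piGraph_walk_diff Wd
    have hall : ∀ i, i ∈ s := fun i => hs i (fun h => hx1 i h.symm)
    exact Finite.of_injective (fun i => (⟨i, hall i⟩ : {x // x ∈ s}))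
      (fun a b h => congrArg Subtype.val h)
  have hftI : Fintype I := Fintype.ofFinite I
  intro j
  set Tset : Set (∀ i, Vf i) := Ψ '' pLayer j a0 with hTset
  have hmixT : ∀ x ∈ Tset, ∀ y ∈ Tset, ∀ i, Function.update x i (y i) ∈ Tset :=
    mix_closed Ψ hΨ hpre j a0
  have hb0T : b0 ∈ Tset := ⟨a0, fun _ _ => rfl, rfl⟩
  have hsymmb0 : Ψ.symm b0 = a0 := by simp [hb0]
  have hF1 : ∀ x ∈ Tset, ∀ i, F b0 i ≠ j → x i = b0 i := by
    intro x hx i hPij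
    by_contra hne'
    obtain ⟨uz, huzL, huzE⟩ := hmixT b0 hb0T x hx i
    have hzL : Function.update b0 i (x i) ∈ pLayer (Uf := Vf) i b0 :=
      fun i' hi' => Function.update_of_ne hi' _ _
    have huz : Ψ.symm (Function.update b0 i (x i)) = uz := by rw [← huzE]; simp
    have hagree : ∀ j' ≠ F b0 i, a0 j' = uz j' := by
      intro j' hj'
      exact hF b0 i _ ⟨b0, fun _ _ => rfl, hsymmb0⟩ _ ⟨_, hzL, huz⟩ j' hj'
    have hne2 : a0 ≠ uz := by
      intro h
      apply hne'
      have h2 : Ψ a0 = Function.update b0 i (x i) := by rw [h, huzE]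
      have := congrFun h2 i
      rw [← hb0] at this
      rw [Function.update_self] at this
      exact this.symm
    obtain ⟨j', hj'⟩ := Function.ne_iff.mp hne2
    have h1 : j' = F b0 i := by
      by_contra h
      exact hj' (hagree j' h)
    have h2 : j' = j := by
      by_contra h
      exact hj' (huzL j' h).symm
    exact hPij (h1 ▸ h2)
  have hF2 : ∀ i, F b0 i = j → ∀ x ∈ pLayer (Uf := Vf) i b0, x ∈ Tset := by
    intro i hPi x hxL
    have hagree := hF b0 i _ ⟨b0, fun _ _ => rfl, hsymmb0⟩ _ ⟨x, hxL, rfl⟩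
    refine ⟨Ψ.symm x, ?_, by simp⟩
    intro j' hj'
    exact (hagree j' (fun h => hj' (h.trans hPi))).symm
  -- every point agreeing with b0 outside P⁻¹(j) lies in the layer's image
  have hbox : ∀ (D : Finset I) (x : ∀ i, Vf i), (∀ i ∉ D, x i = b0 i) →
      (∀ i ∈ D, F b0 i = j) → x ∈ Tset := by
    intro D
    induction D using Finset.induction_on with
    | empty =>
      intro x hx _
      have : x = b0 := funext fun i => hx i (Finset.notMem_empty i)
      rw [this]; exact hb0T
    | @insert a D hnotin ih =>
      intro x hx hD
      have hx' : Function.update x a (b0 a) ∈ Tset := by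
        apply ih
        · intro i' hi'
          by_cases h : i' = a
          · subst h; simp
          · rw [Function.update_of_ne h]
            exact hx i' (by simp [hi', h])
        · intro i' hi'; exact hD i' (Finset.mem_insert_of_mem hi')
      have hyT : Function.update b0 a (x a) ∈ Tset :=
        hF2 a (hD a (Finset.mem_insert_self a D)) _
          (fun i' hi' => Function.update_of_ne hi' _ _)
      have := hmixT _ hx' _ hyT a
      simpa [Function.update_idem] using this
  -- the equivalence
  have hmemT : ∀ w : Wf j, Ψ (Function.update a0 j w) ∈ Tset :=
    fun w => ⟨_, fun j' hj' => Function.update_of_ne hj' _ _, rfl⟩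
  refine ⟨⟨⟨fun w => fun i => Ψ (Function.update a0 j w) i.1,
    fun g => Ψ.symm (fun i => if h : F b0 i = j then g ⟨i, h⟩ else b0 i) j,
    ?_, ?_⟩, ?_⟩⟩
  · -- left inverse
    intro w
    have hfe : (fun i => if h : F b0 i = j then
        (fun i : {i : I // F b0 i = j} => Ψ (Function.update a0 j w) i.1) ⟨i, h⟩ else b0 i)
        = Ψ (Function.update a0 j w) := by
      funext i
      by_cases h : F b0 i = j
      · rw [dif_pos h]
      · rw [dif_neg h]
        exact (hF1 _ (hmemT w) i h).symm
    show Ψ.symm _ j = w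
    rw [hfe]
    simp
  · -- right inverse
    intro g
    set xg : ∀ i, Vf i := fun i => if h : F b0 i = j then g ⟨i, h⟩ else b0 i with hxg
    have hxgT : xg ∈ Tset := by
      apply hbox (Finset.univ.filter (fun i => F b0 i = j))
      · intro i hi
        rw [hxg]
        simp only
        rw [dif_neg (by simpa using hi)]
      · intro i hi
        simpa using hi
    obtain ⟨u, huL, huE⟩ := hxgT
    have h1 : Ψ.symm xg = u := by rw [← huE]; simp
    have hu : Function.update a0 j (u j) = u := by
      funext j'
      by_cases h : j' = j
      · subst h; simp
      · rw [Function.update_of_ne h, huL j' h]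
    show (fun i : {i : I // F b0 i = j} => Ψ (Function.update a0 j (Ψ.symm xg j)) i.1) = g
    funext i
    simp only [h1, hu, huE]
    show xg i.1 = g i
    rw [hxg]
    simp only
    rw [dif_pos i.2]
  · -- adjacency
    intro w w'
    show (piGraph _).Adj _ _ ↔ (Qf j).Adj w w'
    have key : (Qf j).Adj w w' ↔
        (piGraph Gf).Adj (Ψ (Function.update a0 j w)) (Ψ (Function.update a0 j w')) := by
      rw [← hΨ]
      exact update_adj_iff.symm
    rw [key]
    constructor
    · rintro ⟨⟨i1, h1⟩, hadj1, hoth1⟩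
      refine ⟨i1, hadj1, ?_⟩
      intro i' hi'
      by_cases h' : F b0 i' = j
      · exact hoth1 ⟨i', h'⟩ (fun h => hi' (congrArg Subtype.val h))
      · rw [hF1 _ (hmemT w) i' h', hF1 _ (hmemT w') i' h']
    · rintro ⟨i1, hadj1, hoth1⟩
      have h1 : F b0 i1 = j := by
        by_contra h
        rw [hF1 _ (hmemT w) i1 h, hF1 _ (hmemT w') i1 h] at hadj1
        exact (Gf i1).loopless.irrefl _ hadj1
      exact ⟨⟨i1, h1⟩, hadj1, fun i' hi' => hoth1 i'.1 (fun h => hi' (Subtype.ext h))⟩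

end Main

section Reduction

open DiHypergraph

lemma twoSection_iso {V1 V2 : Type} {H1 : DiHypergraph V1} {H2 : DiHypergraph V2}
    {φ : V1 ≃ V2} (hφ : IsIsoVia H1 H2 φ) (x y : V1) :
    (twoSection H1).Adj x y ↔ (twoSection H2).Adj (φ x) (φ y) := by
  constructor
  · rintro ⟨hxy, ⟨t, h⟩, he, hx, hy⟩
    refine ⟨fun h => hxy (φ.injective h), ⟨φ '' t, φ '' h⟩, (hφ t h).mp he, ?_, ?_⟩
    · rcases hx with hx | hx
      · exact Or.inl ⟨x, hx, rfl⟩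
      · exact Or.inr ⟨x, hx, rfl⟩
    · rcases hy with hy | hy
      · exact Or.inl ⟨y, hy, rfl⟩
      · exact Or.inr ⟨y, hy, rfl⟩
  · rintro ⟨hxy, ⟨t, h⟩, he, hx, hy⟩
    refine ⟨fun h => hxy (congrArg φ h), ⟨φ.symm '' t, φ.symm '' h⟩, ?_, ?_, ?_⟩
    · apply (hφ _ _).mpr
      have h1 : φ '' (φ.symm '' t) = t := by
        rw [Set.image_image]; simp
      have h2 : φ '' (φ.symm '' h) = h := by
        rw [Set.image_image]; simp
      rw [h1, h2]
      exact he
    · rcases hx with hx | hx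
      · exact Or.inl ⟨φ x, hx, by simp⟩
      · exact Or.inr ⟨φ x, hx, by simp⟩
    · rcases hy with hy | hy
      · exact Or.inl ⟨φ y, hy, by simp⟩
      · exact Or.inr ⟨φ y, hy, by simp⟩

lemma twoSection_piProd {J : Type} {Wf : J → Type} (Hf : ∀ j, DiHypergraph (Wf j))
    (x y : ∀ j, Wf j) :
    (twoSection (piProd Hf)).Adj x y ↔ (piGraph (fun j => twoSection (Hf j))).Adj x y := by
  constructor
  · rintro ⟨hxy, e, ⟨j, f, hf, base, h1, h2⟩, hx, hy⟩
    have hxm : x j ∈ verts f ∧ ∀ j', j' ≠ j → x j' = base j' := by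
      rcases hx with hx | hx
      · rw [h1] at hx; exact ⟨Or.inl hx.1, hx.2⟩
      · rw [h2] at hx; exact ⟨Or.inr hx.1, hx.2⟩
    have hym : y j ∈ verts f ∧ ∀ j', j' ≠ j → y j' = base j' := by
      rcases hy with hy | hy
      · rw [h1] at hy; exact ⟨Or.inl hy.1, hy.2⟩
      · rw [h2] at hy; exact ⟨Or.inr hy.1, hy.2⟩
    have hoth : ∀ j', j' ≠ j → x j' = y j' :=
      fun j' hj' => (hxm.2 j' hj').trans (hym.2 j' hj').symm
    have hne : x j ≠ y j := by
      intro h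
      apply hxy
      funext j'
      by_cases hj' : j' = j
      · subst hj'; exact h
      · exact hoth j' hj'
    exact ⟨j, ⟨hne, f, hf, hxm.1, hym.1⟩, hoth⟩
  · rintro ⟨j, ⟨hne, f, hf, hxf, hyf⟩, hoth⟩
    have hxy : x ≠ y := fun h => hne (congrFun h j)
    refine ⟨hxy, ({v | v j ∈ f.1 ∧ ∀ j', j' ≠ j → v j' = x j'},
      {v | v j ∈ f.2 ∧ ∀ j', j' ≠ j → v j' = x j'}), ⟨j, f, hf, x, rfl, rfl⟩, ?_, ?_⟩
    · rcases hxf with hx | hx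
      · exact Or.inl ⟨hx, fun _ _ => rfl⟩
      · exact Or.inr ⟨hx, fun _ _ => rfl⟩
    · rcases hyf with hy | hy
      · exact Or.inl ⟨hy, fun j' hj' => (hoth j' hj').symm⟩
      · exact Or.inr ⟨hy, fun j' hj' => (hoth j' hj').symm⟩

lemma connected_twoSection {V : Type} {H : DiHypergraph V} (hconn : H.Connected) :
    (twoSection H).Preconnected := by
  intro x y
  have h := hconn.2 x y
  induction h with
  | refl => exact SimpleGraph.Reachable.refl _
  | tail _ hadj ih =>
    rename_i b c _
    by_cases hbc : b = c
    · exact hbc ▸ ih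
    · obtain ⟨e, he, hb, hc⟩ := hadj
      exact ih.trans (SimpleGraph.Adj.reachable ⟨hbc, e, he, hb, hc⟩)

end Reduction

open DiHypergraph in
theorem prime_graph_factors_partition {V I J : Type} [DecidableEq J]
    {lG : I → ℕ} {Wf : J → Type}
    (H : DiHypergraph V) (hconn : H.Connected)
    (Gf : ∀ i, SimpleGraph (Fin (lG i))) (hGprime : ∀ i, (Gf i).IsPrimeCart)
    (Υ : V ≃ ∀ i, Fin (lG i))
    (hΥ : ∀ x y : V, (twoSection H).Adj x y ↔ (piGraph Gf).Adj (Υ x) (Υ y))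
    (Hf : ∀ j, DiHypergraph (Wf j)) (hfac : Iso H (piProd Hf)) :
    ∃ P : I → J, ∀ j : J,
      Nonempty (twoSection (Hf j) ≃g piGraph (fun i : {i : I // P i = j} => Gf i.1)) := by
  classical
  obtain ⟨φ, hφ⟩ := hfac
  set Ψ : (∀ j, Wf j) ≃ (∀ i, Fin (lG i)) := φ.symm.trans Υ with hΨdef
  have hΨ : ∀ x y, (piGraph (fun j => twoSection (Hf j))).Adj x y ↔
      (piGraph Gf).Adj (Ψ x) (Ψ y) := by
    intro x y
    rw [← twoSection_piProd Hf x y]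
    have h1 : (twoSection (piProd Hf)).Adj x y ↔
        (twoSection H).Adj (φ.symm x) (φ.symm y) := by
      have := twoSection_iso hφ (φ.symm x) (φ.symm y)
      simpa using this.symm
    rw [h1, hΥ]
    rfl
  have hpre : (piGraph (fun j => twoSection (Hf j))).Preconnected := by
    intro x y
    have h := connected_twoSection hconn (φ.symm x) (φ.symm y)
    have h2 := reachable_transfer φ (fun a b => (twoSection_iso hφ a b).trans
      (Iff.symm (twoSection_piProd Hf (φ a) (φ b))).symm) h
    simpa using h2
  have hne : Nonempty (∀ j, Wf j) := ⟨φ hconn.1.some⟩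
  exact graph_main Gf hGprime (fun j => twoSection (Hf j)) Ψ hΨ hpre hne
end
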